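/- Let X be a metric space, let P, P' ⊆ X be subsets, let μ ≥ 1, and let g : X → P be a map satisfying: (a) d(g(x), g(y)) ≤ μ·d(x,y) + μ for all x,y ∈ X; (b) d(g(p), p) ≤ μ for all p ∈ P; and (c) d(x, g(x)) + d(g(x), p) ≤ μ·d(x,p) + μ for all x ∈ X and p ∈ P. Then for every r ≥ 0, if x lies in both the closed r-neighborhood of P and the closed r-neighborhood of P', then d(x, g(P')) ≤ 2μ(r+1), i.e., the intersection N_r(P) ∩ N_r(P') is contained in the 2μ(r+1)-neighborhood of g(P'). -/

import Mathlib

/-- if `g : X → P` is a coarse gate map onto `P` (coarsely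
Lipschitz, coarsely the identity on `P`, with the coarse gate property), then
every point of the closed `r`-neighborhoods of both `P` and `P'` is within
`2μ(r+1)` of `g(P')`. -/
theorem gate_coarse_intersection {X : Type*} [MetricSpace X]
    (P P' : Set X) (μ : ℝ) (hμ : 1 ≤ μ) (g : X → X)
    (hgP : ∀ x : X, g x ∈ P)
    (ha : ∀ x y : X, dist (g x) (g y) ≤ μ * dist x y + μ)
    (hb : ∀ p ∈ P, dist (g p) p ≤ μ)
    (hc : ∀ x : X, ∀ p ∈ P, dist x (g x) + dist (g x) p ≤ μ * dist x p + μ)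
    (r : ℝ) (hr : 0 ≤ r) (x : X)
    (hxP : Metric.infDist x P ≤ r) (hxP' : Metric.infDist x P' ≤ r) :
    Metric.infDist x (g '' P') ≤ 2 * μ * (r + 1) := by
  rcases P'.eq_empty_or_nonempty with hP' | hP'
  · simp [hP', Metric.infDist_empty]
    positivity
  have hPne : P.Nonempty := ⟨g x, hgP x⟩
  refine le_of_forall_pos_le_add fun ε hε => ?_
  have hμ0 : (0:ℝ) < μ := lt_of_lt_of_le one_pos hμ
  set δ := ε / (2 * μ) with hδ
  have hδ0 : 0 < δ := by positivity
  obtain ⟨p, hpP, hp⟩ := (Metric.infDist_lt_iff hPne).mp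
    (lt_of_le_of_lt hxP (by linarith : r < r + δ))
  obtain ⟨p', hp'P', hp'⟩ := (Metric.infDist_lt_iff hP').mp
    (lt_of_le_of_lt hxP' (by linarith : r < r + δ))
  have h1 : dist x (g x) ≤ μ * (r + δ) + μ := by
    have := hc x p hpP
    have h2 : dist x (g x) ≤ μ * dist x p + μ := by
      have := dist_nonneg (x := g x) (y := p); linarith
    calc dist x (g x) ≤ μ * dist x p + μ := h2
      _ ≤ μ * (r + δ) + μ := by nlinarith
  have h2 : dist (g x) (g p') ≤ μ * (r + δ) + μ := by
    calc dist (g x) (g p') ≤ μ * dist x p' + μ := ha x p'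
      _ ≤ μ * (r + δ) + μ := by nlinarith
  have key : dist x (g p') ≤ 2 * μ * (r + 1) + ε := by
    have := dist_triangle x (g x) (g p')
    have : dist x (g p') ≤ 2 * (μ * (r + δ) + μ) := by linarith
    have hδε : 2 * μ * δ = ε := by
      rw [hδ]; field_simp [hμ0.ne']
    nlinarith
  calc Metric.infDist x (g '' P') ≤ dist x (g p') :=
        Metric.infDist_le_dist_of_mem ⟨p', hp'P', rfl⟩
    _ ≤ 2 * μ * (r + 1) + ε := key
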